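/- Under the su(N) generator hypotheses, define the structure constants f a b c := −2·i·trace ((T a * T b − T b * T a) * T c). Then for all i₁, i₂, i₃, j₁, j₂, j₃ ∈ Fin N: Σ_{a,b,c : Fin (N^2 − 1)} f a b c · (T a) i₁ j₁ · (T b) i₂ j₂ · (T c) i₃ j₃ = (i/4) · (δ_{i₁ j₃} · δ_{i₂ j₁} · δ_{i₃ j₂} − δ_{i₁ j₂} · δ_{i₂ j₃} · δ_{i₃ j₁}), where δ is the Kronecker delta. -/

import Mathlib

open Matrix

/-- The antisymmetric structure constants `f a b c = −2i·Tr([T a, T b]·T c)`. -/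
noncomputable def fConst {N : ℕ} (T : Fin (N ^ 2 - 1) → Matrix (Fin N) (Fin N) ℂ)
    (a b c : Fin (N ^ 2 - 1)) : ℂ :=
  -2 * Complex.I * ((T a * T b - T b * T a) * T c).trace

lemma suN_completeness (N : ℕ) (hN : 2 ≤ N)
    (T : Fin (N ^ 2 - 1) → Matrix (Fin N) (Fin N) ℂ)
    (htr : ∀ a, (T a).trace = 0)
    (horth : ∀ a b, (T a * T b).trace = if a = b then (1 / 2 : ℂ) else 0)
    (i j k l : Fin N) :
    ∑ a, T a i j * T a k l =
      (2:ℂ)⁻¹ * ((if i = l then 1 else 0) * (if k = j then 1 else 0)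
        - (N : ℂ)⁻¹ * (if i = j then 1 else 0) * (if k = l then 1 else 0)) := by
  have hN0 : (N : ℂ) ≠ 0 := Nat.cast_ne_zero.2 (by omega)
  set e : (Fin (N ^ 2 - 1) ⊕ Unit) → Matrix (Fin N) (Fin N) ℂ :=
    Sum.elim T (fun _ => 1) with he
  have hindep : LinearIndependent ℂ e := by
    rw [Fintype.linearIndependent_iff]
    intro g hg
    have h1 : g (Sum.inr ()) = 0 := by
      have h := congrArg Matrix.trace hg
      simp [Fintype.sum_sum_type, trace_smul, htr, he, smul_eq_mul, hN0] at h
      exact h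
    have key : ∀ B : Matrix (Fin N) (Fin N) ℂ,
        ((∑ i, g i • e i) * B).trace = ∑ i, g i * (e i * B).trace := by
      intro B
      rw [Finset.sum_mul, trace_sum]
      simp [Matrix.smul_mul, trace_smul]
    have h2 : ∀ b, g (Sum.inl b) = 0 := by
      intro b
      have h := congrArg (fun M => (M * T b).trace) hg
      rw [key] at h
      simp only [he, Finset.sum_mul, Matrix.zero_mul, trace_zero, Matrix.smul_mul,
        trace_smul, Fintype.sum_sum_type, Sum.elim_inl, Sum.elim_inr, trace_sum,
        Matrix.one_mul, smul_eq_mul, horth, htr, mul_ite, mul_one, mul_zero,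
        Finset.sum_ite_eq', Finset.mem_univ, if_true, Finset.univ_unique,
        Finset.sum_const, h1] at h
      simpa using h
    rintro (a | ⟨⟩)
    · exact h2 a
    · exact h1
  have hcard : Fintype.card (Fin (N ^ 2 - 1) ⊕ Unit)
      = Module.finrank ℂ (Matrix (Fin N) (Fin N) ℂ) := by
    simp [Module.finrank_matrix]
    have h1 : 1 ≤ N ^ 2 := by nlinarith
    have : N ^ 2 = N * N := sq N
    omega
  have hspan := hindep.span_eq_top_of_card_eq_finrank hcard
  have hdecomp : ∀ M : Matrix (Fin N) (Fin N) ℂ,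
      ((N : ℂ)⁻¹ * M.trace) • (1 : Matrix (Fin N) (Fin N) ℂ)
        + ∑ a, (2 * (M * T a).trace) • T a = M := by
    intro M
    have hM : M ∈ Submodule.span ℂ (Set.range e) := by rw [hspan]; trivial
    induction hM using Submodule.span_induction with
    | mem x hx =>
        rcases hx with ⟨i0, rfl⟩
        rcases i0 with a | ⟨⟩
        · simp [he, htr, horth, ite_smul, Finset.sum_ite_eq', mul_ite]
          try norm_num
        · simp [he, htr, trace_one, hN0]
    | zero => simp
    | add x y hx hy ihx ihy =>
        conv_rhs => rw [← ihx, ← ihy]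
        simp only [Matrix.add_mul, trace_add, mul_add, add_smul, Finset.sum_add_distrib]
        abel
    | smul c x hx ihx =>
        conv_rhs => rw [← ihx]
        rw [smul_add, Finset.smul_sum]
        congr 1
        · rw [smul_smul, trace_smul, smul_eq_mul]; ring_nf
        · refine Finset.sum_congr rfl fun a _ => ?_
          rw [smul_smul, Matrix.smul_mul, trace_smul, smul_eq_mul]
          congr 1; ring
  have h := hdecomp (single j i 1)
  have t1 : (single j i (1:ℂ)).trace = if i = j then 1 else 0 := by
    simp [Matrix.trace, Matrix.diag, Matrix.single, ite_and, Finset.sum_ite_eq,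
      eq_comm]
  have t2 : ∀ a, (single j i (1:ℂ) * T a).trace = T a i j := by
    intro a
    simp [Matrix.trace, Matrix.diag, Matrix.mul_apply, Matrix.single, ite_and,
      Finset.sum_ite_eq, Finset.mem_univ]
  rw [t1] at h
  have h2 := congrFun (congrFun h k) l
  simp only [Matrix.add_apply, Matrix.smul_apply, Matrix.sum_apply, Matrix.one_apply,
    smul_eq_mul, t2] at h2
  have e2 : Matrix.single j i (1:ℂ) k l
      = (if i = l then (1:ℂ) else 0) * (if k = j then 1 else 0) := by
    by_cases h1 : i = l <;> by_cases hkj : k = j <;>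
      simp [Matrix.single, h1, hkj] <;> tauto
  rw [e2] at h2
  rw [show (∑ a, 2 * T a i j * T a k l) = 2 * ∑ a, T a i j * T a k l from by
    rw [Finset.mul_sum]; exact Finset.sum_congr rfl fun a _ => by ring] at h2
  linear_combination 2⁻¹ * h2

lemma suN_proj (N : ℕ) (hN : 2 ≤ N)
    (T : Fin (N ^ 2 - 1) → Matrix (Fin N) (Fin N) ℂ)
    (htr : ∀ a, (T a).trace = 0)
    (horth : ∀ a b, (T a * T b).trace = if a = b then (1 / 2 : ℂ) else 0)
    (M : Matrix (Fin N) (Fin N) ℂ) (hM : M.trace = 0) (i j : Fin N) :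
    ∑ c, (M * T c).trace * T c i j = 2⁻¹ * M i j := by
  have step1 : ∀ c, (M * T c).trace * T c i j
      = ∑ p, ∑ q, M p q * (T c q p * T c i j) := by
    intro c
    rw [Matrix.trace]
    simp only [Matrix.diag, Matrix.mul_apply]
    rw [Finset.sum_mul]
    refine Finset.sum_congr rfl fun p _ => ?_
    rw [Finset.sum_mul]
    exact Finset.sum_congr rfl fun q _ => by ring
  have hd : ∑ x, M x x = 0 := by simpa [Matrix.trace, Matrix.diag] using hM
  calc ∑ c, (M * T c).trace * T c i j
      = ∑ c, ∑ p, ∑ q, M p q * (T c q p * T c i j) :=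
        Finset.sum_congr rfl fun c _ => step1 c
    _ = ∑ p, ∑ q, M p q * ∑ c, T c q p * T c i j := by
        rw [Finset.sum_comm]
        refine Finset.sum_congr rfl fun p _ => ?_
        rw [Finset.sum_comm]
        exact Finset.sum_congr rfl fun q _ => (Finset.mul_sum _ _ _).symm
    _ = 2⁻¹ * M i j := by
        have hC := suN_completeness N hN T htr horth
        simp only [hC]
        simp only [mul_sub, mul_ite, ite_mul, mul_zero, zero_mul, mul_one, one_mul,
          Finset.sum_sub_distrib, Finset.sum_ite_eq, Finset.sum_ite_eq',
          Finset.mem_univ, if_true]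
        simp only [Finset.sum_ite_irrel, Finset.sum_ite_eq, Finset.sum_ite_eq',
          Finset.mem_univ, if_true, Finset.sum_const_zero]
        rw [show (∑ x, M x x * (2⁻¹ * (N:ℂ)⁻¹)) = (∑ x, M x x) * (2⁻¹ * (N:ℂ)⁻¹) from
          (Finset.sum_mul _ _ _).symm, hd]
        simp
        ring

/-- **Contraction of three su(N) generators with the structure constants f.** -/
theorem suN_f_contraction (N : ℕ) (hN : 2 ≤ N)
    (T : Fin (N ^ 2 - 1) → Matrix (Fin N) (Fin N) ℂ)
    (htr : ∀ a, (T a).trace = 0)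
    (hherm : ∀ a, (T a)ᴴ = T a)
    (horth : ∀ a b, (T a * T b).trace = if a = b then (1 / 2 : ℂ) else 0)
    (i₁ i₂ i₃ j₁ j₂ j₃ : Fin N) :
    ∑ a, ∑ b, ∑ c, fConst T a b c * T a i₁ j₁ * T b i₂ j₂ * T c i₃ j₃ =
      (Complex.I / 4) *
        ((if i₁ = j₃ then 1 else 0) * (if i₂ = j₁ then 1 else 0) * (if i₃ = j₂ then 1 else 0)
          - (if i₁ = j₂ then 1 else 0) * (if i₂ = j₃ then 1 else 0) *
              (if i₃ = j₁ then 1 else 0)) := by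
  have hC := suN_completeness N hN T htr horth
  have key : ∀ a b, ∑ c, fConst T a b c * T a i₁ j₁ * T b i₂ j₂ * T c i₃ j₃
      = ∑ k, (-Complex.I) * ((T a i₁ j₁ * T a i₃ k) * (T b i₂ j₂ * T b k j₃)
          - (T a i₁ j₁ * T a k j₃) * (T b i₂ j₂ * T b i₃ k)) := by
    intro a b
    have hM : (T a * T b - T b * T a).trace = 0 := by
      rw [trace_sub, trace_mul_comm]; ring
    have hp := suN_proj N hN T htr horth (T a * T b - T b * T a) hM i₃ j₃
    calc ∑ c, fConst T a b c * T a i₁ j₁ * T b i₂ j₂ * T c i₃ j₃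
        = (-2 * Complex.I * (T a i₁ j₁ * T b i₂ j₂)) *
            ∑ c, ((T a * T b - T b * T a) * T c).trace * T c i₃ j₃ := by
          rw [Finset.mul_sum]
          exact Finset.sum_congr rfl fun c _ => by rw [fConst]; ring
      _ = -Complex.I * (T a i₁ j₁ * T b i₂ j₂) * ((T a * T b - T b * T a) i₃ j₃) := by
          rw [hp]; ring
      _ = ∑ k, (-Complex.I) * ((T a i₁ j₁ * T a i₃ k) * (T b i₂ j₂ * T b k j₃)
            - (T a i₁ j₁ * T a k j₃) * (T b i₂ j₂ * T b i₃ k)) := by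
          simp only [Matrix.sub_apply, Matrix.mul_apply, ← Finset.sum_sub_distrib]
          rw [Finset.mul_sum]
          exact Finset.sum_congr rfl fun k _ => by ring
  calc ∑ a, ∑ b, ∑ c, fConst T a b c * T a i₁ j₁ * T b i₂ j₂ * T c i₃ j₃
      = ∑ a, ∑ b, ∑ k, (-Complex.I) * ((T a i₁ j₁ * T a i₃ k) * (T b i₂ j₂ * T b k j₃)
          - (T a i₁ j₁ * T a k j₃) * (T b i₂ j₂ * T b i₃ k)) :=
        Finset.sum_congr rfl fun a _ => Finset.sum_congr rfl fun b _ => key a b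
    _ = ∑ k, ∑ a, ∑ b, (-Complex.I) * ((T a i₁ j₁ * T a i₃ k) * (T b i₂ j₂ * T b k j₃)
          - (T a i₁ j₁ * T a k j₃) * (T b i₂ j₂ * T b i₃ k)) := by
        rw [show (∑ a, ∑ b, ∑ k, (-Complex.I) * ((T a i₁ j₁ * T a i₃ k) * (T b i₂ j₂ * T b k j₃)
            - (T a i₁ j₁ * T a k j₃) * (T b i₂ j₂ * T b i₃ k)))
          = ∑ a, ∑ k, ∑ b, (-Complex.I) * ((T a i₁ j₁ * T a i₃ k) * (T b i₂ j₂ * T b k j₃)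
            - (T a i₁ j₁ * T a k j₃) * (T b i₂ j₂ * T b i₃ k)) from
          Finset.sum_congr rfl fun a _ => Finset.sum_comm]
        exact Finset.sum_comm
    _ = ∑ k, (-Complex.I) * ((∑ a, T a i₁ j₁ * T a i₃ k) * (∑ b, T b i₂ j₂ * T b k j₃)
          - (∑ a, T a i₁ j₁ * T a k j₃) * (∑ b, T b i₂ j₂ * T b i₃ k)) := by
        refine Finset.sum_congr rfl fun k _ => ?_
        rw [Finset.sum_mul_sum, Finset.sum_mul_sum]
        simp only [← Finset.sum_sub_distrib, Finset.mul_sum, mul_sub]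
    _ = (Complex.I / 4) * _ := by
        simp only [hC]
        simp only [mul_sub, sub_mul, mul_ite, ite_mul, mul_one, one_mul, mul_zero,
          zero_mul, Finset.sum_sub_distrib, Finset.sum_ite_irrel, Finset.sum_ite_eq,
          Finset.sum_ite_eq', Finset.mem_univ, if_true, Finset.sum_const_zero]
        split_ifs <;> ring
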